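/- For every simple type α built from Unit, Bool, products, and function types (no name type), there are only finitely many values of type α up to contextual equivalence; i.e., there exists a finite list of closed values of type α such that every closed simply-typed λ-calculus term of type α is contextually equivalent to some value in the list. -/

import Mathlib

/-! Types of the ν-calculus: Unit, Bool, the name type Nm, products and arrows. -/
inductive Ty : Type
  | unit : Ty
  | bool : Ty
  | nm : Ty
  | prod : Ty → Ty → Ty
  | arrow : Ty → Ty → Ty
  deriving DecidableEq

/-! Terms of the ν-calculus, with named variables (names and variables are ℕ). -/
inductive Tm : Type
  | var : ℕ → Tm
  | unit : Tm
  | tt : Tm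
  | ff : Tm
  | name : ℕ → Tm
  | gensym : Tm
  | lam : ℕ → Ty → Tm → Tm
  | app : Tm → Tm → Tm
  | pair : Tm → Tm → Tm
  | fst : Tm → Tm
  | snd : Tm → Tm
  | cond : Tm → Tm → Tm → Tm
  | letin : ℕ → Tm → Tm → Tm
  | eq : Tm → Tm → Tm
  deriving DecidableEq

/-- The finite set of name constants occurring in a term. -/
def AN : Tm → Finset ℕ
  | .name r => {r}
  | .lam _ _ M => AN M
  | .app M N => AN M ∪ AN N
  | .pair M N => AN M ∪ AN N
  | .fst M => AN M
  | .snd M => AN M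
  | .cond M N₁ N₂ => AN M ∪ AN N₁ ∪ AN N₂
  | .letin _ M N => AN M ∪ AN N
  | .eq M N => AN M ∪ AN N
  | _ => ∅

/-- Free variables of a term. -/
def FV : Tm → Finset ℕ
  | .var x => {x}
  | .lam x _ M => FV M \ {x}
  | .app M N => FV M ∪ FV N
  | .pair M N => FV M ∪ FV N
  | .fst M => FV M
  | .snd M => FV M
  | .cond M N₁ N₂ => FV M ∪ FV N₁ ∪ FV N₂
  | .letin x M N => FV M ∪ (FV N \ {x})
  | .eq M N => FV M ∪ FV N
  | _ => ∅

/-- Substitution of a closed term `V` for the variable `x` (no capture since `V` is closed). -/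
def subst (x : ℕ) (V : Tm) : Tm → Tm
  | .var y => if y = x then V else .var y
  | .lam y α M => if y = x then .lam y α M else .lam y α (subst x V M)
  | .app M N => .app (subst x V M) (subst x V N)
  | .pair M N => .pair (subst x V M) (subst x V N)
  | .fst M => .fst (subst x V M)
  | .snd M => .snd (subst x V M)
  | .cond M N₁ N₂ => .cond (subst x V M) (subst x V N₁) (subst x V N₂)
  | .letin y M N => .letin y (subst x V M) (if y = x then N else subst x V N)
  | .eq M N => .eq (subst x V M) (subst x V N)
  | t => t

/-- Values. -/
inductive IsValue : Tm → Prop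
  | var : ∀ x, IsValue (.var x)
  | unit : IsValue .unit
  | tt : IsValue .tt
  | ff : IsValue .ff
  | name : ∀ r, IsValue (.name r)
  | gensym : IsValue .gensym
  | lam : ∀ x α M, IsValue (.lam x α M)
  | pair : ∀ {V W}, IsValue V → IsValue W → IsValue (.pair V W)

/-- Typing contexts: ordered lists of variable/type pairs, later entries more recent. -/
abbrev Ctx := List (ℕ × Ty)

/-- Look up the most recent binding of `x` in `Γ`. -/
def lookupVar (Γ : Ctx) (x : ℕ) : Option Ty :=
  (Γ.reverse.find? (fun p => p.1 == x)).map Prod.snd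

/-- Typing judgement `Γ ⊢ M : α` of the ν-calculus. -/
inductive Typed : Ctx → Tm → Ty → Prop
  | var : ∀ {Γ x α}, lookupVar Γ x = some α → Typed Γ (.var x) α
  | unit : ∀ {Γ}, Typed Γ .unit .unit
  | tt : ∀ {Γ}, Typed Γ .tt .bool
  | ff : ∀ {Γ}, Typed Γ .ff .bool
  | name : ∀ {Γ} (r : ℕ), Typed Γ (.name r) .nm
  | gensym : ∀ {Γ}, Typed Γ .gensym (.arrow .unit .nm)
  | lam : ∀ {Γ x α β M}, Typed (Γ ++ [(x, α)]) M β → Typed Γ (.lam x α M) (.arrow α β)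
  | app : ∀ {Γ M N α β}, Typed Γ M (.arrow α β) → Typed Γ N α → Typed Γ (.app M N) β
  | pair : ∀ {Γ M N α β}, Typed Γ M α → Typed Γ N β → Typed Γ (.pair M N) (.prod α β)
  | fst : ∀ {Γ M α β}, Typed Γ M (.prod α β) → Typed Γ (.fst M) α
  | snd : ∀ {Γ M α β}, Typed Γ M (.prod α β) → Typed Γ (.snd M) β
  | cond : ∀ {Γ M N₁ N₂ α}, Typed Γ M .bool → Typed Γ N₁ α → Typed Γ N₂ α →
      Typed Γ (.cond M N₁ N₂) α
  | letin : ∀ {Γ x M N α β}, Typed Γ M α → Typed (Γ ++ [(x, α)]) N β →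
      Typed Γ (.letin x M N) β
  | eqNm : ∀ {Γ M N}, Typed Γ M .nm → Typed Γ N .nm → Typed Γ (.eq M N) .bool
  | eqBool : ∀ {Γ M N}, Typed Γ M .bool → Typed Γ N .bool → Typed Γ (.eq M N) .bool

/-- Big-step call-by-value evaluation on configurations `(G, M) ⇓ (G', V)` where `G`
is the set of names generated so far. -/
inductive Eval : Finset ℕ → Tm → Finset ℕ → Tm → Prop
  | val : ∀ {G V}, IsValue V → Eval G V G V
  | app : ∀ {G G₁ G₂ G₃ M N B V W x α},
      Eval G M G₁ (.lam x α B) → Eval G₁ N G₂ W → IsValue W →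
      Eval G₂ (subst x W B) G₃ V → Eval G (.app M N) G₃ V
  | gensym : ∀ {G G₁ G₂ M N} (r : ℕ),
      Eval G M G₁ .gensym → Eval G₁ N G₂ .unit → r ∉ G₂ →
      Eval G (.app M N) (insert r G₂) (.name r)
  | pair : ∀ {G G₁ G₂ M N V W},
      Eval G M G₁ V → Eval G₁ N G₂ W → Eval G (.pair M N) G₂ (.pair V W)
  | fst : ∀ {G G₁ M V W}, Eval G M G₁ (.pair V W) → Eval G (.fst M) G₁ V
  | snd : ∀ {G G₁ M V W}, Eval G M G₁ (.pair V W) → Eval G (.snd M) G₁ W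
  | condT : ∀ {G G₁ G₂ M N₁ N₂ V},
      Eval G M G₁ .tt → Eval G₁ N₁ G₂ V → Eval G (.cond M N₁ N₂) G₂ V
  | condF : ∀ {G G₁ G₂ M N₁ N₂ V},
      Eval G M G₁ .ff → Eval G₁ N₂ G₂ V → Eval G (.cond M N₁ N₂) G₂ V
  | letin : ∀ {G G₁ G₂ M N W V x},
      Eval G M G₁ W → IsValue W → Eval G₁ (subst x W N) G₂ V →
      Eval G (.letin x M N) G₂ V
  | eqT : ∀ {G G₁ G₂ M N r},
      Eval G M G₁ (.name r) → Eval G₁ N G₂ (.name r) → Eval G (.eq M N) G₂ .tt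
  | eqF : ∀ {G G₁ G₂ M N r s},
      Eval G M G₁ (.name r) → Eval G₁ N G₂ (.name s) → r ≠ s →
      Eval G (.eq M N) G₂ .ff
  | eqBoolT : ∀ {G G₁ G₂ M N b},
      Eval G M G₁ b → Eval G₁ N G₂ b → (b = Tm.tt ∨ b = Tm.ff) →
      Eval G (.eq M N) G₂ .tt
  | eqBoolF : ∀ {G G₁ G₂ M N b₁ b₂},
      Eval G M G₁ b₁ → Eval G₁ N G₂ b₂ →
      ((b₁ = Tm.tt ∧ b₂ = Tm.ff) ∨ (b₁ = Tm.ff ∧ b₂ = Tm.tt)) →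
      Eval G (.eq M N) G₂ .ff

/-- Types not mentioning the name type `Nm`. -/
def NmFreeTy : Ty → Prop
  | .nm => False
  | .prod a b => NmFreeTy a ∧ NmFreeTy b
  | .arrow a b => NmFreeTy a ∧ NmFreeTy b
  | _ => True

/-- Base types β ::= Unit | Bool | β × β. -/
inductive BaseTy : Ty → Prop
  | unit : BaseTy .unit
  | bool : BaseTy .bool
  | prod : ∀ {a b}, BaseTy a → BaseTy b → BaseTy (.prod a b)

/-- Terms with no occurrence of `gensym`. -/
def NoGensym : Tm → Prop
  | .gensym => False
  | .lam _ _ M => NoGensym M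
  | .app M N => NoGensym M ∧ NoGensym N
  | .pair M N => NoGensym M ∧ NoGensym N
  | .fst M => NoGensym M
  | .snd M => NoGensym M
  | .cond M N₁ N₂ => NoGensym M ∧ NoGensym N₁ ∧ NoGensym N₂
  | .letin _ M N => NoGensym M ∧ NoGensym N
  | .eq M N => NoGensym M ∧ NoGensym N
  | _ => True

/-- Logical expressions: variables, constants, pairing and projections. -/
def IsExpr : Tm → Prop
  | .var _ => True
  | .unit => True
  | .tt => True
  | .ff => True
  | .pair e e' => IsExpr e ∧ IsExpr e'
  | .fst e => IsExpr e
  | .snd e => IsExpr e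
  | _ => False

def boolVal : Bool → Tm
  | true => .tt
  | false => .ff

/-- Contextual equivalence of closed terms `M, N` of type `α` with names in `G`:
every boolean-valued closing context (a term with one free variable, the hole)
with names in `G` evaluates `M` and `N` to the same boolean. -/
def CtxEquiv (G : Finset ℕ) (α : Ty) (M N : Tm) : Prop :=
  ∀ (h : ℕ) (C : Tm) (b : Bool), Typed [(h, α)] C .bool → AN C ⊆ G →
    ((∃ G', Eval G (subst h M C) G' (boolVal b)) ↔
     (∃ G', Eval G (subst h N C) G' (boolVal b)))

/-- Models: finite maps from variables to closed values, as ordered lists. -/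
abbrev Model := List (ℕ × Tm)

/-- All names occurring in a model. -/
def ANModel (ξ : Model) : Finset ℕ := ξ.foldr (fun p s => AN p.2 ∪ s) ∅

/-- Closure of a term by a model: substitute each binding. -/
def msubst (ξ : Model) (M : Tm) : Tm := ξ.foldl (fun N p => subst p.1 p.2 N) M

/-- Look up the value of `x` in the model `ξ`. -/
def modelLookup (ξ : Model) (x : ℕ) : Option Tm :=
  (ξ.reverse.find? (fun p => p.1 == x)).map Prod.snd

/-- A model is typed by a context when it binds the same variables, in order,
to closed values of the corresponding types. -/
inductive ModelTyped : Ctx → Model → Prop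
  | nil : ModelTyped [] []
  | cons : ∀ {Γ ξ x α V}, IsValue V → Typed [] V α → ModelTyped Γ ξ →
      ModelTyped ((x, α) :: Γ) ((x, V) :: ξ)

/-- Single-step model extension: add one binding `y : V` where `V` is derived
from the current model by a name-free term. -/
def ModelExt1 (p q : Ctx × Model) : Prop :=
  ∃ (y : ℕ) (α : Ty) (M V : Tm) (G' : Finset ℕ),
    q.1 = p.1 ++ [(y, α)] ∧ q.2 = p.2 ++ [(y, V)] ∧
    AN M = ∅ ∧ Typed p.1 M α ∧ IsValue V ∧
    Eval (ANModel p.2) (msubst p.2 M) G' V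

/-- Model extension `ξ ⪯* ξ′`: reflexive-transitive closure of single steps. -/
def ModelExt : Ctx × Model → Ctx × Model → Prop := Relation.ReflTransGen ModelExt1

/-! ### Auxiliary development -/

section AuxSubst

lemma subst_of_not_mem_FV {x : ℕ} {V : Tm} : ∀ {N : Tm}, x ∉ FV N → subst x V N = N := by
  intro N
  induction N with
  | var y =>
      intro h
      simp only [FV, Finset.mem_singleton] at h
      simp [subst, Ne.symm h]
  | unit => intro _; rfl
  | tt => intro _; rfl
  | ff => intro _; rfl
  | name r => intro _; rfl
  | gensym => intro _; rfl
  | lam y α M ih =>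
      intro h
      simp only [FV, Finset.mem_sdiff, Finset.mem_singleton, not_and, not_not] at h
      by_cases hxy : y = x
      · simp [subst, hxy]
      · have hx : x ∉ FV M := fun hm => hxy ((h hm).symm)
        simp [subst, hxy, ih hx]
  | app M N ihM ihN =>
      intro h
      simp only [FV, Finset.mem_union] at h
      push_neg at h
      simp [subst, ihM h.1, ihN h.2]
  | pair M N ihM ihN =>
      intro h
      simp only [FV, Finset.mem_union] at h
      push_neg at h
      simp [subst, ihM h.1, ihN h.2]
  | fst M ih =>
      intro h
      simp only [FV] at h
      simp [subst, ih h]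
  | snd M ih =>
      intro h
      simp only [FV] at h
      simp [subst, ih h]
  | cond M N₁ N₂ ihM ih1 ih2 =>
      intro h
      simp only [FV, Finset.mem_union] at h
      push_neg at h
      simp [subst, ihM h.1.1, ih1 h.1.2, ih2 h.2]
  | letin y M N ihM ihN =>
      intro h
      simp only [FV, Finset.mem_union, Finset.mem_sdiff, Finset.mem_singleton] at h
      push_neg at h
      by_cases hxy : y = x
      · simp [subst, hxy, ihM h.1]
      · have hx : x ∉ FV N := fun hm => hxy ((h.2 hm).symm)
        simp [subst, hxy, ihM h.1, ihN hx]
  | eq M N ihM ihN =>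
      intro h
      simp only [FV, Finset.mem_union] at h
      push_neg at h
      simp [subst, ihM h.1, ihN h.2]

lemma subst_closed {x : ℕ} {V N : Tm} (h : FV N = ∅) : subst x V N = N :=
  subst_of_not_mem_FV (by simp [h])

lemma fv_subst {x : ℕ} {V : Tm} (hV : FV V = ∅) :
    ∀ {N : Tm}, FV (subst x V N) ⊆ FV N \ {x} := by
  intro N
  induction N with
  | var y =>
      by_cases hxy : y = x
      · simp [subst, hxy, hV]
      · simp only [subst, if_neg hxy, FV]
        intro z hz
        simp only [Finset.mem_singleton] at hz
        subst hz
        simp [hxy]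
  | unit => simp [subst, FV]
  | tt => simp [subst, FV]
  | ff => simp [subst, FV]
  | name r => simp [subst, FV]
  | gensym => simp [subst, FV]
  | lam y α M ih =>
      by_cases hxy : y = x
      · subst hxy
        simp only [subst, if_pos rfl, FV, ↓reduceIte]
        intro z hz
        simp only [Finset.mem_sdiff, Finset.mem_singleton] at hz ⊢
        exact ⟨hz, fun hzx => hz.2 (hzx ▸ rfl)⟩
      · simp only [subst, if_neg hxy, FV]
        intro z hz
        simp only [Finset.mem_sdiff, Finset.mem_singleton] at hz ⊢
        obtain ⟨hz1, hz2⟩ := hz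
        have := ih hz1
        simp only [Finset.mem_sdiff, Finset.mem_singleton] at this
        exact ⟨⟨this.1, hz2⟩, this.2⟩
  | app M N ihM ihN =>
      simp only [subst, FV]
      intro z hz
      simp only [Finset.mem_union] at hz
      rcases hz with hz | hz
      · have := ihM hz
        simp only [Finset.mem_sdiff, Finset.mem_singleton, Finset.mem_union] at this ⊢
        exact ⟨Or.inl this.1, this.2⟩
      · have := ihN hz
        simp only [Finset.mem_sdiff, Finset.mem_singleton, Finset.mem_union] at this ⊢
        exact ⟨Or.inr this.1, this.2⟩
  | pair M N ihM ihN =>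
      simp only [subst, FV]
      intro z hz
      simp only [Finset.mem_union] at hz
      rcases hz with hz | hz
      · have := ihM hz
        simp only [Finset.mem_sdiff, Finset.mem_singleton, Finset.mem_union] at this ⊢
        exact ⟨Or.inl this.1, this.2⟩
      · have := ihN hz
        simp only [Finset.mem_sdiff, Finset.mem_singleton, Finset.mem_union] at this ⊢
        exact ⟨Or.inr this.1, this.2⟩
  | fst M ih => simpa [subst, FV] using ih
  | snd M ih => simpa [subst, FV] using ih
  | cond M N₁ N₂ ihM ih1 ih2 =>
      simp only [subst, FV]
      intro z hz
      simp only [Finset.mem_union] at hz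
      simp only [Finset.mem_sdiff, Finset.mem_singleton, Finset.mem_union]
      rcases hz with (hz | hz) | hz
      · have := ihM hz
        simp only [Finset.mem_sdiff, Finset.mem_singleton] at this
        exact ⟨Or.inl (Or.inl this.1), this.2⟩
      · have := ih1 hz
        simp only [Finset.mem_sdiff, Finset.mem_singleton] at this
        exact ⟨Or.inl (Or.inr this.1), this.2⟩
      · have := ih2 hz
        simp only [Finset.mem_sdiff, Finset.mem_singleton] at this
        exact ⟨Or.inr this.1, this.2⟩
  | letin y M N ihM ihN =>
      by_cases hxy : y = x
      · subst hxy
        simp only [subst, if_pos rfl, FV]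
        intro z hz
        simp only [Finset.mem_union, Finset.mem_sdiff, Finset.mem_singleton] at hz ⊢
        rcases hz with hz | hz
        · have := ihM hz
          simp only [Finset.mem_sdiff, Finset.mem_singleton] at this
          exact ⟨Or.inl this.1, this.2⟩
        · exact ⟨Or.inr hz, fun hzx => hz.2 (hzx ▸ rfl)⟩
      · simp only [subst, if_neg hxy, FV]
        intro z hz
        simp only [Finset.mem_union, Finset.mem_sdiff, Finset.mem_singleton] at hz ⊢
        rcases hz with hz | hz
        · have := ihM hz
          simp only [Finset.mem_sdiff, Finset.mem_singleton] at this
          exact ⟨Or.inl this.1, this.2⟩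
        · have := ihN hz.1
          simp only [Finset.mem_sdiff, Finset.mem_singleton] at this
          exact ⟨Or.inr ⟨this.1, hz.2⟩, this.2⟩
  | eq M N ihM ihN =>
      simp only [subst, FV]
      intro z hz
      simp only [Finset.mem_union] at hz
      rcases hz with hz | hz
      · have := ihM hz
        simp only [Finset.mem_sdiff, Finset.mem_singleton, Finset.mem_union] at this ⊢
        exact ⟨Or.inl this.1, this.2⟩
      · have := ihN hz
        simp only [Finset.mem_sdiff, Finset.mem_singleton, Finset.mem_union] at this ⊢
        exact ⟨Or.inr this.1, this.2⟩

lemma ng_subst {x : ℕ} {V : Tm} (hV : NoGensym V) :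
    ∀ {N : Tm}, NoGensym N → NoGensym (subst x V N) := by
  intro N
  induction N with
  | var y => intro _; by_cases hxy : y = x <;> simp [subst, hxy, hV]; trivial
  | unit => intro _; trivial
  | tt => intro _; trivial
  | ff => intro _; trivial
  | name r => intro _; trivial
  | gensym => intro h; exact h.elim
  | lam y α M ih =>
      intro h
      by_cases hxy : y = x
      · simpa [subst, hxy] using h
      · simp only [NoGensym] at h
        simp only [subst, if_neg hxy, NoGensym]
        exact ih h
  | app M N ihM ihN =>
      intro h; obtain ⟨h1, h2⟩ := h
      exact ⟨ihM h1, ihN h2⟩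
  | pair M N ihM ihN =>
      intro h; obtain ⟨h1, h2⟩ := h
      exact ⟨ihM h1, ihN h2⟩
  | fst M ih => intro h; exact ih h
  | snd M ih => intro h; exact ih h
  | cond M N₁ N₂ ihM ih1 ih2 =>
      intro h; obtain ⟨h1, h2, h3⟩ := h
      exact ⟨ihM h1, ih1 h2, ih2 h3⟩
  | letin y M N ihM ihN =>
      intro h; obtain ⟨h1, h2⟩ := h
      by_cases hxy : y = x
      · simp only [subst, if_pos hxy]
        exact ⟨ihM h1, h2⟩
      · simp only [subst, if_neg hxy]
        exact ⟨ihM h1, ihN h2⟩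
  | eq M N ihM ihN =>
      intro h; obtain ⟨h1, h2⟩ := h
      exact ⟨ihM h1, ihN h2⟩

end AuxSubst
section AuxMsubst

/-- First-binding lookup in a model (matches the order in which `msubst` applies). -/
def lookV (ξ : Model) (x : ℕ) : Option Tm :=
  (ξ.find? (fun p => p.1 == x)).map Prod.snd

lemma msubst_nil (M : Tm) : msubst [] M = M := rfl

lemma msubst_cons (p : ℕ × Tm) (ξ : Model) (M : Tm) :
    msubst (p :: ξ) M = msubst ξ (subst p.1 p.2 M) := rfl

lemma msubst_append (ξ ξ' : Model) (M : Tm) :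
    msubst (ξ ++ ξ') M = msubst ξ' (msubst ξ M) := by
  simp [msubst, List.foldl_append]

lemma msubst_closed {M : Tm} (h : FV M = ∅) : ∀ ξ : Model, msubst ξ M = M := by
  intro ξ
  induction ξ with
  | nil => rfl
  | cons p ξ ih => rw [msubst_cons, subst_closed h, ih]

lemma msubst_var {ξ : Model} (hc : ∀ p ∈ ξ, FV p.2 = ∅) (y : ℕ) :
    msubst ξ (.var y) = (lookV ξ y).getD (.var y) := by
  induction ξ with
  | nil => rfl
  | cons p ξ ih =>
      rw [msubst_cons]
      by_cases hy : p.1 = y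
      · subst hy
        have h1 : subst p.1 p.2 (Tm.var p.1) = p.2 := by simp [subst]
        rw [h1, msubst_closed (hc p (by simp)) ξ]
        simp [lookV]
      · have h1 : subst p.1 p.2 (Tm.var y) = Tm.var y := by
          simp only [subst, if_neg (fun h : y = p.1 => hy h.symm)]
        rw [h1, ih (fun q hq => hc q (by simp [hq]))]
        have hb : (p.1 == y) = false := by simp [hy]
        simp [lookV, List.find?_cons, hb]

lemma msubst_unit (ξ : Model) : msubst ξ .unit = .unit := msubst_closed (by simp [FV]) ξ
lemma msubst_tt (ξ : Model) : msubst ξ .tt = .tt := msubst_closed (by simp [FV]) ξ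
lemma msubst_ff (ξ : Model) : msubst ξ .ff = .ff := msubst_closed (by simp [FV]) ξ

lemma msubst_app (ξ : Model) (M N : Tm) :
    msubst ξ (.app M N) = .app (msubst ξ M) (msubst ξ N) := by
  induction ξ generalizing M N with
  | nil => rfl
  | cons p ξ ih => simp only [msubst_cons, subst]; exact ih _ _

lemma msubst_pair (ξ : Model) (M N : Tm) :
    msubst ξ (.pair M N) = .pair (msubst ξ M) (msubst ξ N) := by
  induction ξ generalizing M N with
  | nil => rfl
  | cons p ξ ih => simp only [msubst_cons, subst]; exact ih _ _

lemma msubst_fst (ξ : Model) (M : Tm) : msubst ξ (.fst M) = .fst (msubst ξ M) := by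
  induction ξ generalizing M with
  | nil => rfl
  | cons p ξ ih => simp only [msubst_cons, subst]; exact ih _

lemma msubst_snd (ξ : Model) (M : Tm) : msubst ξ (.snd M) = .snd (msubst ξ M) := by
  induction ξ generalizing M with
  | nil => rfl
  | cons p ξ ih => simp only [msubst_cons, subst]; exact ih _

lemma msubst_cond (ξ : Model) (M N₁ N₂ : Tm) :
    msubst ξ (.cond M N₁ N₂) = .cond (msubst ξ M) (msubst ξ N₁) (msubst ξ N₂) := by
  induction ξ generalizing M N₁ N₂ with
  | nil => rfl
  | cons p ξ ih => simp only [msubst_cons, subst]; exact ih _ _ _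

lemma msubst_eq (ξ : Model) (M N : Tm) :
    msubst ξ (.eq M N) = .eq (msubst ξ M) (msubst ξ N) := by
  induction ξ generalizing M N with
  | nil => rfl
  | cons p ξ ih => simp only [msubst_cons, subst]; exact ih _ _

lemma msubst_lam (ξ : Model) (x : ℕ) (α : Ty) (B : Tm) :
    msubst ξ (.lam x α B) = .lam x α (msubst (ξ.filter (fun p => x != p.1)) B) := by
  induction ξ generalizing B with
  | nil => rfl
  | cons p ξ ih =>
      rw [msubst_cons]
      by_cases hx : x = p.1
      · have h1 : subst p.1 p.2 (Tm.lam x α B) = Tm.lam x α B := by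
          simp [subst, hx]
        rw [h1, List.filter_cons]
        have hb : (x != p.1) = false := by simp [hx]
        simp only [hb, Bool.false_eq_true, if_false]
        exact ih B
      · have h1 : subst p.1 p.2 (Tm.lam x α B) = Tm.lam x α (subst p.1 p.2 B) := by
          simp [subst, hx]
        rw [h1, List.filter_cons]
        have hb : (x != p.1) = true := by simp [hx]
        simp only [hb, if_pos]
        rw [ih]
        rfl

lemma msubst_letin (ξ : Model) (x : ℕ) (M N : Tm) :
    msubst ξ (.letin x M N) =
      .letin x (msubst ξ M) (msubst (ξ.filter (fun p => x != p.1)) N) := by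
  induction ξ generalizing M N with
  | nil => rfl
  | cons p ξ ih =>
      rw [msubst_cons]
      by_cases hx : x = p.1
      · have h1 : subst p.1 p.2 (Tm.letin x M N) = Tm.letin x (subst p.1 p.2 M) N := by
          simp [subst, hx]
        rw [h1, List.filter_cons]
        have hb : (x != p.1) = false := by simp [hx]
        simp only [hb, Bool.false_eq_true, if_false]
        rw [ih]
        rfl
      · have h1 : subst p.1 p.2 (Tm.letin x M N) =
            Tm.letin x (subst p.1 p.2 M) (subst p.1 p.2 N) := by
          simp [subst, hx]
        rw [h1, List.filter_cons]
        have hb : (x != p.1) = true := by simp [hx]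
        simp only [hb, if_pos]
        rw [ih]
        rfl

lemma fv_msubst {ξ : Model} (hc : ∀ p ∈ ξ, FV p.2 = ∅) (M : Tm) :
    FV (msubst ξ M) ⊆ FV M \ (ξ.map Prod.fst).toFinset := by
  induction ξ generalizing M with
  | nil => simp [msubst_nil]
  | cons p ξ ih =>
      rw [msubst_cons]
      intro z hz
      have h1 := ih (fun q hq => hc q (by simp [hq])) (subst p.1 p.2 M) hz
      simp only [Finset.mem_sdiff, List.map_cons, List.toFinset_cons, Finset.mem_insert] at h1 ⊢
      have h2 := fv_subst (hc p (by simp)) h1.1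
      simp only [Finset.mem_sdiff, Finset.mem_singleton] at h2
      exact ⟨h2.1, fun h => h.elim (fun h => h2.2 h) (fun h => h1.2 h)⟩

lemma ng_msubst {ξ : Model} (hg : ∀ p ∈ ξ, NoGensym p.2) {M : Tm} (hM : NoGensym M) :
    NoGensym (msubst ξ M) := by
  induction ξ generalizing M with
  | nil => exact hM
  | cons p ξ ih =>
      rw [msubst_cons]
      exact ih (fun q hq => hg q (by simp [hq])) (ng_subst (hg p (by simp)) hM)

lemma lookV_cons (z : ℕ) (N : Tm) (ξ : Model) (y : ℕ) :
    lookV ((z, N) :: ξ) y = if z = y then some N else lookV ξ y := by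
  by_cases h : z = y <;> simp [lookV, List.find?_cons, h]

lemma lookV_append_single (ξ : Model) (x y : ℕ) (W : Tm) :
    lookV (ξ ++ [(x, W)]) y =
      match lookV ξ y with
      | some N => some N
      | none => if x = y then some W else none := by
  induction ξ with
  | nil => by_cases h : x = y <;> simp [lookV, List.find?_cons, h]
  | cons p ξ ih =>
      by_cases h : p.1 = y
      · simp [lookV, List.find?_cons, h]
      · have hb : (p.1 == y) = false := by simp [h]
        simp only [List.cons_append, lookV, List.find?_cons, hb]
        exact ih

lemma lookV_filter (ξ : Model) (x y : ℕ) (hne : y ≠ x) :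
    lookV (ξ.filter (fun p => x != p.1)) y = lookV ξ y := by
  induction ξ with
  | nil => rfl
  | cons p ξ ih =>
      rw [List.filter_cons]
      by_cases hx : x = p.1
      · have : (x != p.1) = false := by simp [hx]
        simp only [this, if_neg (by simp : ¬ false = true)]
        rw [ih]
        have : p.1 ≠ y := fun h => hne (by rw [← h, hx])
        simp [lookV, List.find?_cons, this]
      · have hb : (x != p.1) = true := by simp [hx]
        simp only [hb, if_pos]
        by_cases h : p.1 = y
        · simp [lookV, List.find?_cons, h]
        · have hb2 : (p.1 == y) = false := by simp [h]
          simp only [lookV, List.find?_cons, hb2]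
          exact ih

lemma lookupVar_append (Γ : Ctx) (x : ℕ) (α : Ty) (y : ℕ) :
    lookupVar (Γ ++ [(x, α)]) y = if x = y then some α else lookupVar Γ y := by
  by_cases h : x = y <;> simp [lookupVar, List.find?_cons, h]

lemma lookupVar_mem {Γ : Ctx} {x : ℕ} {α : Ty} (h : lookupVar Γ x = some α) :
    x ∈ (Γ.map Prod.fst).toFinset := by
  simp only [lookupVar, Option.map_eq_some_iff] at h
  obtain ⟨p, hp, hsnd⟩ := h
  have hmem := List.mem_of_find?_eq_some hp
  have heq := List.find?_some hp
  simp only [beq_iff_eq] at heq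
  rw [List.mem_reverse] at hmem
  simp only [List.mem_toFinset, List.mem_map]
  exact ⟨p, hmem, heq⟩

lemma mem_lookupVar {Γ : Ctx} {x : ℕ} (h : x ∈ (Γ.map Prod.fst).toFinset) :
    ∃ α, lookupVar Γ x = some α := by
  simp only [List.mem_toFinset, List.mem_map] at h
  obtain ⟨p, hp, hfst⟩ := h
  have hex : (Γ.reverse.find? (fun q => q.1 == x)).isSome := by
    rw [List.find?_isSome]
    exact ⟨p, by simp [hp], by simp [hfst]⟩
  obtain ⟨q, hq⟩ := Option.isSome_iff_exists.mp hex
  exact ⟨q.2, by simp [lookupVar, hq]⟩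

lemma typed_fv : ∀ {Γ M α}, Typed Γ M α → FV M ⊆ (Γ.map Prod.fst).toFinset := by
  intro Γ M α h
  induction h with
  | var hl => simpa [FV] using lookupVar_mem hl
  | unit => simp [FV]
  | tt => simp [FV]
  | ff => simp [FV]
  | name => simp [FV]
  | gensym => simp [FV]
  | @lam Γ x α β M _ ih =>
      simp only [FV]
      intro z hz
      simp only [Finset.mem_sdiff, Finset.mem_singleton] at hz
      have := ih hz.1
      simp only [List.map_append, List.toFinset_append, Finset.mem_union, List.map_cons,
        List.toFinset_cons, List.map_nil, List.toFinset_nil] at this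
      rcases this with h | h
      · exact h
      · simp only [List.toFinset_nil, Finset.mem_insert] at h
        rcases h with h | h
        · exact absurd h hz.2
        · exact absurd h (Finset.notMem_empty z)
  | app _ _ ihM ihN =>
      simp only [FV]
      exact Finset.union_subset ihM ihN
  | pair _ _ ihM ihN =>
      simp only [FV]
      exact Finset.union_subset ihM ihN
  | fst _ ih => simpa [FV] using ih
  | snd _ ih => simpa [FV] using ih
  | cond _ _ _ ihM ih1 ih2 =>
      simp only [FV]
      exact Finset.union_subset (Finset.union_subset ihM ih1) ih2
  | @letin Γ x M N α β _ _ ihM ihN =>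
      simp only [FV]
      apply Finset.union_subset ihM
      intro z hz
      simp only [Finset.mem_sdiff, Finset.mem_singleton] at hz
      have := ihN hz.1
      simp only [List.map_append, List.toFinset_append, Finset.mem_union, List.map_cons,
        List.toFinset_cons, List.map_nil, List.toFinset_nil] at this
      rcases this with h | h
      · exact h
      · simp only [List.toFinset_nil, Finset.mem_insert] at h
        rcases h with h | h
        · exact absurd h hz.2
        · exact absurd h (Finset.notMem_empty z)
  | eqNm _ _ ihM ihN =>
      simp only [FV]
      exact Finset.union_subset ihM ihN
  | eqBool _ _ ihM ihN =>
      simp only [FV]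
      exact Finset.union_subset ihM ihN

lemma typed_closed {M : Tm} {α : Ty} (h : Typed [] M α) : FV M = ∅ := by
  have := typed_fv h
  simpa using Finset.subset_empty.mp (by simpa using this)

end AuxMsubst
section AuxEval

lemma eval_value : ∀ {G M G' V}, Eval G M G' V → IsValue M → G' = G ∧ V = M := by
  intro G M G' V h
  induction h with
  | val _ => exact fun _ => ⟨rfl, rfl⟩
  | app _ _ _ _ _ _ _ => intro hv; cases hv
  | gensym _ _ _ _ => intro hv; cases hv
  | pair _ _ ihM ihN =>
      intro hv
      cases hv with
      | pair hV hW =>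
          obtain ⟨rfl, rfl⟩ := ihM hV
          obtain ⟨rfl, rfl⟩ := ihN hW
          exact ⟨rfl, rfl⟩
  | fst _ _ => intro hv; cases hv
  | snd _ _ => intro hv; cases hv
  | condT _ _ _ _ => intro hv; cases hv
  | condF _ _ _ _ => intro hv; cases hv
  | letin _ _ _ _ _ => intro hv; cases hv
  | eqT _ _ _ _ => intro hv; cases hv
  | eqF _ _ _ _ _ => intro hv; cases hv
  | eqBoolT _ _ _ _ _ => intro hv; cases hv
  | eqBoolF _ _ _ _ _ => intro hv; cases hv

lemma eval_ng : ∀ {G M G' V}, Eval G M G' V → NoGensym M → NoGensym V := by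
  intro G M G' V h
  induction h with
  | val _ => exact id
  | app _ _ _ _ ihM ihN ihB =>
      intro hg
      obtain ⟨h1, h2⟩ := hg
      exact ihB (ng_subst (ihN h2) (ihM h1))
  | gensym _ _ _ _ ihM _ =>
      intro hg
      exact absurd (ihM hg.1) id
  | pair _ _ ihM ihN => intro hg; exact ⟨ihM hg.1, ihN hg.2⟩
  | fst _ ih => intro hg; exact (ih hg).1
  | snd _ ih => intro hg; exact (ih hg).2
  | condT _ _ _ ih => intro hg; exact ih hg.2.1
  | condF _ _ _ ih => intro hg; exact ih hg.2.2
  | letin _ _ _ ihM ihN =>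
      intro hg
      exact ihN (ng_subst (ihM hg.1) hg.2)
  | eqT _ _ _ _ => intro _; trivial
  | eqF _ _ _ _ _ => intro _; trivial
  | eqBoolT _ _ _ _ _ => intro _; trivial
  | eqBoolF _ _ _ _ _ => intro _; trivial

lemma eval_det' : ∀ {G M G₁ V₁}, Eval G M G₁ V₁ → NoGensym M →
    ∀ {G₂ V₂}, Eval G M G₂ V₂ → G₁ = G₂ ∧ V₁ = V₂ := by
  intro G M G₁ V₁ h
  induction h with
  | val hv =>
      intro _ G₂ V₂ h2
      obtain ⟨rfl, rfl⟩ := eval_value h2 hv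
      exact ⟨rfl, rfl⟩
  | @app G G₁' G₂' G₃' M N B V W x α hM hN hWv hB ihM ihN ihB =>
      intro hg G₂ V₂ h2
      obtain ⟨hg1, hg2⟩ := hg
      cases h2 with
      | val hv => cases hv
      | app hM' hN' hWv' hB' =>
          obtain ⟨rfl, hlam⟩ := ihM hg1 hM'
          cases hlam
          obtain ⟨rfl, rfl⟩ := ihN hg2 hN'
          have hgB0 := eval_ng hM hg1
          have hgB : NoGensym B := by simpa [NoGensym] using hgB0
          exact ihB (ng_subst (eval_ng hN hg2) hgB) hB'
      | gensym r hM' hN' hr =>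
          obtain ⟨_, hlam⟩ := ihM hg1 hM'
          cases hlam
  | @gensym G G₁' G₂' M N r hM hN hr ihM ihN =>
      intro hg
      exact absurd (eval_ng hM hg.1) id
  | pair hM hN ihM ihN =>
      intro hg G₂ V₂ h2
      cases h2 with
      | val hv =>
          cases hv with
          | pair hV hW =>
              obtain ⟨rfl, rfl⟩ := eval_value hM hV
              obtain ⟨rfl, rfl⟩ := eval_value hN hW
              exact ⟨rfl, rfl⟩
      | pair hM' hN' =>
          obtain ⟨rfl, rfl⟩ := ihM hg.1 hM'
          obtain ⟨rfl, rfl⟩ := ihN hg.2 hN'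
          exact ⟨rfl, rfl⟩
  | fst hM ihM =>
      intro hg G₂ V₂ h2
      cases h2 with
      | val hv => cases hv
      | fst hM' =>
          obtain ⟨rfl, hp⟩ := ihM hg hM'
          cases hp
          exact ⟨rfl, rfl⟩
  | snd hM ihM =>
      intro hg G₂ V₂ h2
      cases h2 with
      | val hv => cases hv
      | snd hM' =>
          obtain ⟨rfl, hp⟩ := ihM hg hM'
          cases hp
          exact ⟨rfl, rfl⟩
  | condT hM hN ihM ihN =>
      intro hg G₂ V₂ h2
      cases h2 with
      | val hv => cases hv
      | condT hM' hN' =>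
          obtain ⟨rfl, _⟩ := ihM hg.1 hM'
          exact ihN hg.2.1 hN'
      | condF hM' hN' =>
          obtain ⟨_, h⟩ := ihM hg.1 hM'
          cases h
  | condF hM hN ihM ihN =>
      intro hg G₂ V₂ h2
      cases h2 with
      | val hv => cases hv
      | condT hM' hN' =>
          obtain ⟨_, h⟩ := ihM hg.1 hM'
          cases h
      | condF hM' hN' =>
          obtain ⟨rfl, _⟩ := ihM hg.1 hM'
          exact ihN hg.2.2 hN'
  | letin hM hWv hN ihM ihN =>
      intro hg G₂ V₂ h2
      cases h2 with
      | val hv => cases hv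
      | letin hM' hWv' hN' =>
          obtain ⟨rfl, rfl⟩ := ihM hg.1 hM'
          exact ihN (ng_subst (eval_ng hM hg.1) hg.2) hN'
  | eqT hM hN ihM ihN =>
      intro hg G₂ V₂ h2
      cases h2 with
      | val hv => cases hv
      | eqT hM' hN' =>
          obtain ⟨rfl, h⟩ := ihM hg.1 hM'
          cases h
          obtain ⟨rfl, _⟩ := ihN hg.2 hN'
          exact ⟨rfl, rfl⟩
      | eqF hM' hN' hne =>
          obtain ⟨rfl, h⟩ := ihM hg.1 hM'
          cases h
          obtain ⟨rfl, h'⟩ := ihN hg.2 hN'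
          cases h'
          exact absurd rfl hne
      | eqBoolT hM' hN' hb =>
          obtain ⟨_, h⟩ := ihM hg.1 hM'
          rcases hb with rfl | rfl <;> cases h
      | eqBoolF hM' hN' hb =>
          obtain ⟨_, h⟩ := ihM hg.1 hM'
          rcases hb with ⟨rfl, _⟩ | ⟨rfl, _⟩ <;> cases h
  | eqF hM hN hne ihM ihN =>
      intro hg G₂ V₂ h2
      cases h2 with
      | val hv => cases hv
      | eqT hM' hN' =>
          obtain ⟨rfl, h⟩ := ihM hg.1 hM'
          cases h
          obtain ⟨rfl, h'⟩ := ihN hg.2 hN'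
          cases h'
          exact absurd rfl hne
      | eqF hM' hN' hne' =>
          obtain ⟨rfl, _⟩ := ihM hg.1 hM'
          obtain ⟨rfl, _⟩ := ihN hg.2 hN'
          exact ⟨rfl, rfl⟩
      | eqBoolT hM' hN' hb =>
          obtain ⟨_, h⟩ := ihM hg.1 hM'
          rcases hb with rfl | rfl <;> cases h
      | eqBoolF hM' hN' hb =>
          obtain ⟨_, h⟩ := ihM hg.1 hM'
          rcases hb with ⟨rfl, _⟩ | ⟨rfl, _⟩ <;> cases h
  | eqBoolT hM hN hb ihM ihN =>
      intro hg G₂ V₂ h2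
      cases h2 with
      | val hv => cases hv
      | eqT hM' hN' =>
          obtain ⟨_, h⟩ := ihM hg.1 hM'
          rcases hb with rfl | rfl <;> cases h
      | eqF hM' hN' hne =>
          obtain ⟨_, h⟩ := ihM hg.1 hM'
          rcases hb with rfl | rfl <;> cases h
      | eqBoolT hM' hN' hb' =>
          obtain ⟨rfl, rfl⟩ := ihM hg.1 hM'
          obtain ⟨rfl, _⟩ := ihN hg.2 hN'
          exact ⟨rfl, rfl⟩
      | eqBoolF hM' hN' hb' =>
          obtain ⟨rfl, rfl⟩ := ihM hg.1 hM'
          obtain ⟨rfl, heq⟩ := ihN hg.2 hN'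
          rcases hb' with ⟨rfl, h2⟩ | ⟨rfl, h2⟩ <;> rw [← heq] at h2 <;> cases h2
  | eqBoolF hM hN hb ihM ihN =>
      intro hg G₂ V₂ h2
      cases h2 with
      | val hv => cases hv
      | eqT hM' hN' =>
          obtain ⟨_, h⟩ := ihM hg.1 hM'
          rcases hb with ⟨rfl, _⟩ | ⟨rfl, _⟩ <;> cases h
      | eqF hM' hN' hne =>
          obtain ⟨_, h⟩ := ihM hg.1 hM'
          rcases hb with ⟨rfl, _⟩ | ⟨rfl, _⟩ <;> cases h
      | eqBoolT hM' hN' hb' =>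
          obtain ⟨rfl, rfl⟩ := ihM hg.1 hM'
          obtain ⟨rfl, heq⟩ := ihN hg.2 hN'
          rcases hb with ⟨rfl, rfl⟩ | ⟨rfl, rfl⟩ <;> cases heq
      | eqBoolF hM' hN' hb' =>
          obtain ⟨rfl, rfl⟩ := ihM hg.1 hM'
          obtain ⟨rfl, _⟩ := ihN hg.2 hN'
          exact ⟨rfl, rfl⟩

end AuxEval
section Semantics

/-- Finite semantics of types (the name type gets the trivial interpretation). -/
def sem : Ty → Type
  | .unit => Unit
  | .bool => Bool
  | .nm => Unit
  | .prod a b => sem a × sem b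
  | .arrow a b => sem a → sem b

def semDef : (α : Ty) → sem α
  | .unit => ()
  | .bool => true
  | .nm => ()
  | .prod a b => (semDef a, semDef b)
  | .arrow _ b => fun _ => semDef b

mutual
def semFin : (α : Ty) → Fintype (sem α)
  | .unit => inferInstanceAs (Fintype Unit)
  | .bool => inferInstanceAs (Fintype Bool)
  | .nm => inferInstanceAs (Fintype Unit)
  | .prod a b =>
      letI := semFin a; letI := semFin b
      inferInstanceAs (Fintype (sem a × sem b))
  | .arrow a b =>
      letI := semFin a; letI := semFin b; letI := semDecEq a
      inferInstanceAs (Fintype (sem a → sem b))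
def semDecEq : (α : Ty) → DecidableEq (sem α)
  | .unit => inferInstanceAs (DecidableEq Unit)
  | .bool => inferInstanceAs (DecidableEq Bool)
  | .nm => inferInstanceAs (DecidableEq Unit)
  | .prod a b =>
      letI := semDecEq a; letI := semDecEq b
      inferInstanceAs (DecidableEq (sem a × sem b))
  | .arrow a b =>
      letI := semFin a; letI := semDecEq a; letI := semDecEq b
      inferInstanceAs (DecidableEq (sem a → sem b))
end

/-- The logical relation between closed values and semantic elements. -/
def R : (α : Ty) → Tm → sem α → Prop
  | .unit, V, _ => V = .unit
  | .bool, V, d => V = boolVal d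
  | .nm, _, _ => False
  | .prod a b, V, d => ∃ V₁ V₂, V = .pair V₁ V₂ ∧ R a V₁ d.1 ∧ R b V₂ d.2
  | .arrow a b, V, f =>
      FV V = ∅ ∧ ∃ x β B, V = .lam x β B ∧
        ∀ W d, R a W d → ∃ U, Eval ∅ (subst x W B) ∅ U ∧ R b U (f d)

/-- A closed term is `RT`-related when it evaluates (without generating names)
to a related value. -/
def RT (α : Ty) (N : Tm) (d : sem α) : Prop :=
  ∃ V, Eval ∅ N ∅ V ∧ R α V d

lemma R_value : ∀ (α : Ty) {V : Tm} {d : sem α}, R α V d → IsValue V ∧ FV V = ∅ := by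
  intro α
  induction α with
  | unit => intro V d h; cases h; exact ⟨.unit, by simp [FV]⟩
  | bool =>
      intro V d h
      cases h
      cases d
      · exact ⟨.ff, by simp [boolVal, FV]⟩
      · exact ⟨.tt, by simp [boolVal, FV]⟩
  | nm => intro V d h; exact h.elim
  | prod a b iha ihb =>
      intro V d h
      obtain ⟨V₁, V₂, rfl, h1, h2⟩ := h
      obtain ⟨hv1, hc1⟩ := iha h1
      obtain ⟨hv2, hc2⟩ := ihb h2
      exact ⟨.pair hv1 hv2, by simp [FV, hc1, hc2]⟩
  | arrow a b iha ihb =>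
      intro V d h
      obtain ⟨hc, x, β, B, rfl, _⟩ := h
      exact ⟨.lam x β B, hc⟩

lemma sizeOf_ty_pos : ∀ t : Ty, 0 < sizeOf t := by
  intro t; cases t <;> simp

mutual
/-- Canonical closed value denoting a semantic element. -/
noncomputable def reify : (α : Ty) → sem α → Tm
  | .unit, _ => .unit
  | .bool, d => boolVal d
  | .nm, _ => .unit
  | .prod a b, d => .pair (reify a d.1) (reify b d.2)
  | .arrow a b, f => .lam 0 a (caseTm a (.var 0) (fun d => reify b (f d)))
termination_by α _ => (sizeOf α, 0)
decreasing_by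
  all_goals simp_wf
  all_goals
    first
      | (apply Prod.Lex.left; omega)
      | (apply Prod.Lex.left
         have := sizeOf_ty_pos a
         have := sizeOf_ty_pos b
         omega)

/-- Case analysis on the semantic value of a scrutinee of type `a`. -/
noncomputable def caseTm : (a : Ty) → Tm → (sem a → Tm) → Tm
  | .unit, _, k => k ()
  | .bool, t, k => .cond t (k true) (k false)
  | .nm, _, k => k ()
  | .prod a b, t, k =>
      caseTm a (.fst t) (fun x => caseTm b (.snd t) (fun y => k (x, y)))
  | .arrow a b, t, k =>
      caseList a b (@Finset.univ _ (semFin a)).toList t k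
termination_by a _ _ => (sizeOf a, 0)
decreasing_by
  all_goals simp_wf
  all_goals
    first
      | (apply Prod.Lex.left; omega)
      | (apply Prod.Lex.left
         have := sizeOf_ty_pos a
         have := sizeOf_ty_pos b
         omega)

noncomputable def caseList : (a b : Ty) → List (sem a) → Tm → ((sem a → sem b) → Tm) → Tm
  | _, b, [], _, k => k (fun _ => semDef b)
  | a, b, x :: xs, t, k =>
      caseTm b (.app t (reify a x)) (fun y =>
        caseList a b xs t (fun g => k (letI := semDecEq a; Function.update g x y)))
termination_by a b xs _ _ => (sizeOf a + sizeOf b, xs.length + 1)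
decreasing_by
  all_goals simp_wf
  all_goals
    first
      | (apply Prod.Lex.right; omega)
      | (apply Prod.Lex.left
         have := sizeOf_ty_pos a
         have := sizeOf_ty_pos b
         omega)
      | (apply Prod.Lex.left; omega)
end

end Semantics
section ReifyProps

lemma reify_value : ∀ (α : Ty) (d : sem α), IsValue (reify α d) := by
  intro α
  induction α with
  | unit => intro d; simp only [reify]; exact IsValue.unit
  | bool =>
      intro d
      simp only [reify]; cases d <;> simp only [boolVal] <;>
        first | exact IsValue.ff | exact IsValue.tt
  | nm => intro d; simp only [reify]; exact IsValue.unit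
  | prod a b iha ihb =>
      intro d
      simp only [reify]
      exact IsValue.pair (iha d.1) (ihb d.2)
  | arrow a b iha ihb =>
      intro d
      simp only [reify]
      exact IsValue.lam _ _ _

mutual
theorem fv_reify : ∀ (α : Ty) (d : sem α), FV (reify α d) = ∅
  | .unit, _ => by simp [reify, FV]
  | .bool, d => by simp only [reify]; cases d <;> simp [boolVal, FV]
  | .nm, _ => by simp [reify, FV]
  | .prod a b, d => by
      simp only [reify, FV]
      rw [fv_reify a d.1, fv_reify b d.2]
      simp
  | .arrow a b, f => by
      simp only [reify, FV]
      have h := fv_caseTm a (.var 0) (fun d => reify b (f d)) {0}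
        (by simp [FV]) (fun e => by rw [fv_reify b (f e)]; simp)
      rw [Finset.sdiff_eq_empty_iff_subset]
      exact h
termination_by α _ => (sizeOf α, 0)
decreasing_by
  all_goals simp_wf
  all_goals apply Prod.Lex.left
  all_goals omega

theorem fv_caseTm : ∀ (a : Ty) (t : Tm) (k : sem a → Tm) (S : Finset ℕ),
    FV t ⊆ S → (∀ e, FV (k e) ⊆ S) → FV (caseTm a t k) ⊆ S
  | .unit, t, k, S => fun _ hk => by simp only [caseTm]; exact hk ()
  | .bool, t, k, S => fun ht hk => by
      simp only [caseTm, FV]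
      exact Finset.union_subset (Finset.union_subset ht (hk true)) (hk false)
  | .nm, t, k, S => fun _ hk => by simp only [caseTm]; exact hk ()
  | .prod a b, t, k, S => fun ht hk => by
      simp only [caseTm]
      exact fv_caseTm a (.fst t) _ S (by simpa [FV] using ht)
        (fun x => fv_caseTm b (.snd t) _ S (by simpa [FV] using ht) (fun y => hk (x, y)))
  | .arrow a b, t, k, S => fun ht hk => by
      simp only [caseTm]
      exact fv_caseList a b _ t k S ht hk
termination_by a _ _ _ => (sizeOf a, 0)
decreasing_by
  all_goals simp_wf
  all_goals
    first
      | (apply Prod.Lex.left; omega)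
      | (apply Prod.Lex.left
         have := sizeOf_ty_pos a
         have := sizeOf_ty_pos b
         omega)

theorem fv_caseList : ∀ (a b : Ty) (xs : List (sem a)) (t : Tm)
    (k : (sem a → sem b) → Tm) (S : Finset ℕ),
    FV t ⊆ S → (∀ g, FV (k g) ⊆ S) → FV (caseList a b xs t k) ⊆ S
  | a, b, [], t, k, S => fun _ hk => by simp only [caseList]; exact hk _
  | a, b, x :: xs, t, k, S => fun ht hk => by
      simp only [caseList]
      apply fv_caseTm b (.app t (reify a x)) _ S
      · simp only [FV]
        rw [fv_reify a x]
        simpa using ht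
      · intro y
        exact fv_caseList a b xs t _ S ht (fun g => hk _)
termination_by a b xs _ _ _ => (sizeOf a + sizeOf b, xs.length + 1)
decreasing_by
  all_goals simp_wf
  all_goals
    first
      | (apply Prod.Lex.right; omega)
      | (apply Prod.Lex.left
         have := sizeOf_ty_pos a
         have := sizeOf_ty_pos b
         omega)
      | (apply Prod.Lex.left; omega)
end

mutual
theorem ang_reify : ∀ (α : Ty) (d : sem α), AN (reify α d) = ∅ ∧ NoGensym (reify α d)
  | .unit, _ => by simp only [reify]; exact ⟨rfl, trivial⟩
  | .bool, d => by simp only [reify]; cases d <;> simp only [boolVal] <;> exact ⟨rfl, trivial⟩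
  | .nm, _ => by simp only [reify]; exact ⟨rfl, trivial⟩
  | .prod a b, d => by
      obtain ⟨h1, h2⟩ := ang_reify a d.1
      obtain ⟨h3, h4⟩ := ang_reify b d.2
      simp only [reify]
      exact ⟨by simp [AN, h1, h3], ⟨h2, h4⟩⟩
  | .arrow a b, f => by
      have h := ang_caseTm a (.var 0) (fun d => reify b (f d))
        ⟨rfl, trivial⟩ (fun e => ang_reify b (f e))
      simp only [reify]
      exact ⟨by simpa [AN] using h.1, by simpa [NoGensym] using h.2⟩
termination_by α _ => (sizeOf α, 0)
decreasing_by
  all_goals simp_wf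
  all_goals apply Prod.Lex.left
  all_goals omega

theorem ang_caseTm : ∀ (a : Ty) (t : Tm) (k : sem a → Tm),
    (AN t = ∅ ∧ NoGensym t) → (∀ e, AN (k e) = ∅ ∧ NoGensym (k e)) →
    AN (caseTm a t k) = ∅ ∧ NoGensym (caseTm a t k)
  | .unit, t, k => fun _ hk => by simp only [caseTm]; exact hk ()
  | .bool, t, k => fun ht hk => by
      simp only [caseTm]
      exact ⟨by simp [AN, ht.1, (hk true).1, (hk false).1],
        ⟨ht.2, (hk true).2, (hk false).2⟩⟩
  | .nm, t, k => fun _ hk => by simp only [caseTm]; exact hk ()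
  | .prod a b, t, k => fun ht hk => by
      simp only [caseTm]
      exact ang_caseTm a (.fst t) _ (by exact ⟨by simp [AN, ht.1], ht.2⟩)
        (fun x => ang_caseTm b (.snd t) _ (by exact ⟨by simp [AN, ht.1], ht.2⟩)
          (fun y => hk (x, y)))
  | .arrow a b, t, k => fun ht hk => by
      simp only [caseTm]
      exact ang_caseList a b _ t k ht hk
termination_by a _ _ => (sizeOf a, 0)
decreasing_by
  all_goals simp_wf
  all_goals
    first
      | (apply Prod.Lex.left; omega)
      | (apply Prod.Lex.left
         have := sizeOf_ty_pos a
         have := sizeOf_ty_pos b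
         omega)

theorem ang_caseList : ∀ (a b : Ty) (xs : List (sem a)) (t : Tm)
    (k : (sem a → sem b) → Tm),
    (AN t = ∅ ∧ NoGensym t) → (∀ g, AN (k g) = ∅ ∧ NoGensym (k g)) →
    AN (caseList a b xs t k) = ∅ ∧ NoGensym (caseList a b xs t k)
  | a, b, [], t, k => fun _ hk => by simp only [caseList]; exact hk _
  | a, b, x :: xs, t, k => fun ht hk => by
      simp only [caseList]
      apply ang_caseTm b (.app t (reify a x)) _
      · obtain ⟨h1, h2⟩ := ang_reify a x
        exact ⟨by simp [AN, ht.1, h1], ⟨ht.2, h2⟩⟩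
      · intro y
        exact ang_caseList a b xs t _ ht (fun g => hk _)
termination_by a b xs _ _ => (sizeOf a + sizeOf b, xs.length + 1)
decreasing_by
  all_goals simp_wf
  all_goals
    first
      | (apply Prod.Lex.right; omega)
      | (apply Prod.Lex.left
         have := sizeOf_ty_pos a
         have := sizeOf_ty_pos b
         omega)
      | (apply Prod.Lex.left; omega)
end

mutual
theorem typed_reify : ∀ (α : Ty), NmFreeTy α → ∀ (d : sem α) (Γ : Ctx),
    Typed Γ (reify α d) α
  | .unit, _, d, Γ => by simp only [reify]; exact Typed.unit
  | .bool, _, d, Γ => by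
      simp only [reify]; cases d <;> simp only [boolVal] <;>
        first | exact Typed.ff | exact Typed.tt
  | .nm, h, _, _ => h.elim
  | .prod a b, h, d, Γ => by
      simp only [reify]
      exact Typed.pair (typed_reify a h.1 d.1 Γ) (typed_reify b h.2 d.2 Γ)
  | .arrow a b, h, f, Γ => by
      simp only [reify]
      apply Typed.lam
      apply typed_caseTm a h.1 (.var 0) _ _
      · exact Typed.var (by rw [lookupVar_append]; simp)
      · intro e
        exact typed_reify b h.2 (f e) _
termination_by α _ _ _ => (sizeOf α, 0)
decreasing_by
  all_goals simp_wf
  all_goals apply Prod.Lex.left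
  all_goals omega

theorem typed_caseTm : ∀ (a : Ty), NmFreeTy a → ∀ {c : Ty} (t : Tm) (k : sem a → Tm)
    (Γ : Ctx), Typed Γ t a → (∀ e, Typed Γ (k e) c) → Typed Γ (caseTm a t k) c
  | .unit, _, _, t, k, Γ => fun _ hk => by simp only [caseTm]; exact hk ()
  | .bool, _, _, t, k, Γ => fun ht hk => by
      simp only [caseTm]
      exact Typed.cond ht (hk true) (hk false)
  | .nm, h, _, t, k, Γ => h.elim
  | .prod a b, h, c, t, k, Γ => fun ht hk => by
      simp only [caseTm]
      exact typed_caseTm a h.1 (.fst t) _ Γ (Typed.fst ht)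
        (fun x => typed_caseTm b h.2 (.snd t) _ Γ (Typed.snd ht) (fun y => hk (x, y)))
  | .arrow a b, h, c, t, k, Γ => fun ht hk => by
      simp only [caseTm]
      exact typed_caseList a b h.1 h.2 _ t k Γ ht hk
termination_by a _ _ _ _ => (sizeOf a, 0)
decreasing_by
  all_goals simp_wf
  all_goals
    first
      | (apply Prod.Lex.left; omega)
      | (apply Prod.Lex.left
         have := sizeOf_ty_pos a
         have := sizeOf_ty_pos b
         omega)

theorem typed_caseList : ∀ (a b : Ty), NmFreeTy a → NmFreeTy b → ∀ {c : Ty}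
    (xs : List (sem a)) (t : Tm) (k : (sem a → sem b) → Tm) (Γ : Ctx),
    Typed Γ t (.arrow a b) → (∀ g, Typed Γ (k g) c) → Typed Γ (caseList a b xs t k) c
  | a, b, _, _, _, [], t, k, Γ => fun _ hk => by simp only [caseList]; exact hk _
  | a, b, ha, hb, c, x :: xs, t, k, Γ => fun ht hk => by
      simp only [caseList]
      apply typed_caseTm b hb (.app t (reify a x)) _ Γ
      · exact Typed.app ht (typed_reify a ha x Γ)
      · intro y
        exact typed_caseList a b ha hb xs t _ Γ ht (fun g => hk _)
termination_by a b _ _ _ xs _ _ _ => (sizeOf a + sizeOf b, xs.length + 1)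
decreasing_by
  all_goals simp_wf
  all_goals
    first
      | (apply Prod.Lex.right; omega)
      | (apply Prod.Lex.left
         have := sizeOf_ty_pos a
         have := sizeOf_ty_pos b
         omega)
      | (apply Prod.Lex.left; omega)
end

lemma subst_reify (x : ℕ) (V : Tm) (α : Ty) (d : sem α) :
    subst x V (reify α d) = reify α d :=
  subst_closed (fv_reify α d)

mutual
theorem subst_caseTm : ∀ (a : Ty) (t : Tm) (k : sem a → Tm) (x : ℕ) (V : Tm),
    subst x V (caseTm a t k) = caseTm a (subst x V t) (fun e => subst x V (k e))
  | .unit, t, k, x, V => by simp only [caseTm]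
  | .bool, t, k, x, V => by simp only [caseTm, subst]
  | .nm, t, k, x, V => by simp only [caseTm]
  | .prod a b, t, k, x, V => by
      simp only [caseTm]
      rw [subst_caseTm a (.fst t) _ x V]
      have h1 : subst x V (Tm.fst t) = Tm.fst (subst x V t) := rfl
      rw [h1]
      congr 1
      funext e
      rw [subst_caseTm b (.snd t) _ x V]
      rfl
  | .arrow a b, t, k, x, V => by
      simp only [caseTm]
      exact subst_caseList a b _ t k x V
termination_by a _ _ _ _ => (sizeOf a, 0)
decreasing_by
  all_goals simp_wf
  all_goals
    first
      | (apply Prod.Lex.left; omega)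
      | (apply Prod.Lex.left
         have := sizeOf_ty_pos a
         have := sizeOf_ty_pos b
         omega)

theorem subst_caseList : ∀ (a b : Ty) (xs : List (sem a)) (t : Tm)
    (k : (sem a → sem b) → Tm) (x : ℕ) (V : Tm),
    subst x V (caseList a b xs t k) =
      caseList a b xs (subst x V t) (fun g => subst x V (k g))
  | a, b, [], t, k, x, V => by simp only [caseList]
  | a, b, z :: xs, t, k, x, V => by
      simp only [caseList]
      rw [subst_caseTm b (.app t (reify a z)) _ x V]
      have h1 : subst x V (Tm.app t (reify a z)) =
          Tm.app (subst x V t) (reify a z) := by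
        show Tm.app (subst x V t) (subst x V (reify a z)) = _
        rw [subst_reify]
      rw [h1]
      congr 1
      funext y
      rw [subst_caseList a b xs t _ x V]
termination_by a b xs _ _ _ _ => (sizeOf a + sizeOf b, xs.length + 1)
decreasing_by
  all_goals simp_wf
  all_goals
    first
      | (apply Prod.Lex.right; omega)
      | (apply Prod.Lex.left
         have := sizeOf_ty_pos a
         have := sizeOf_ty_pos b
         omega)
      | (apply Prod.Lex.left; omega)
end

end ReifyProps
section Spec

/-- Override a function on a finite list of points, default elsewhere. -/
def override (a b : Ty) (xs : List (sem a)) (f : sem a → sem b) : sem a → sem b :=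
  letI := semDecEq a
  fun z => if z ∈ xs then f z else semDef b

lemma override_nil (a b : Ty) (f : sem a → sem b) :
    override a b [] f = fun _ => semDef b := by
  funext z; simp [override]

lemma override_cons (a b : Ty) (x : sem a) (xs : List (sem a)) (f : sem a → sem b) :
    (letI := semDecEq a
     Function.update (override a b xs f) x (f x)) = override a b (x :: xs) f := by
  letI := semDecEq a
  funext z
  by_cases hz : z = x
  · subst hz; simp [override, Function.update]
  · simp [override, Function.update, hz, List.mem_cons]

lemma override_univ (a b : Ty) (f : sem a → sem b) :
    override a b (@Finset.univ _ (semFin a)).toList f = f := by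
  funext z
  simp [override, Finset.mem_toList]

mutual
theorem reflect : ∀ (α : Ty), NmFreeTy α → ∀ d : sem α, R α (reify α d) d
  | .unit, _, d => by simp [reify, R]
  | .bool, _, d => by simp [reify, R]
  | .nm, h, d => h.elim
  | .prod a b, h, d => by
      simp only [reify, R]
      exact ⟨_, _, rfl, reflect a h.1 d.1, reflect b h.2 d.2⟩
  | .arrow a b, h, f => by
      have hfv : FV (reify (.arrow a b) f) = ∅ := fv_reify _ f
      simp only [reify] at hfv ⊢
      simp only [R]
      refine ⟨hfv, 0, a, _, rfl, ?_⟩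
      intro W d hW
      have hsub : subst 0 W (caseTm a (.var 0) (fun e => reify b (f e))) =
          caseTm a W (fun e => reify b (f e)) := by
        rw [subst_caseTm]
        have : subst 0 W (Tm.var 0) = W := by simp [subst]
        rw [this]
        congr 1
        funext e
        rw [subst_reify]
      rw [hsub]
      have hmain := caseTm_spec a h.1 (c := b) W (fun e => reify b (f e)) f d
        ⟨W, Eval.val (R_value a hW).1, hW⟩
        (fun e => ⟨reify b (f e), Eval.val (reify_value b (f e)), reflect b h.2 (f e)⟩)
      obtain ⟨U, h1, h2⟩ := hmain
      exact ⟨U, h1, h2⟩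
termination_by α _ _ => (sizeOf α, 0)
decreasing_by
  all_goals simp_wf
  all_goals apply Prod.Lex.left
  all_goals omega

theorem caseTm_spec : ∀ (a : Ty), NmFreeTy a → ∀ {c : Ty} (t : Tm) (k : sem a → Tm)
    (g : sem a → sem c) (d : sem a), RT a t d → (∀ e, RT c (k e) (g e)) →
    RT c (caseTm a t k) (g d)
  | .unit, _, c, t, k, g, d => fun _ hk => by simp only [caseTm]; exact hk ()
  | .bool, _, c, t, k, g, d => fun ht hk => by
      simp only [caseTm]
      obtain ⟨V, hV, hR⟩ := ht
      simp only [R] at hR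
      subst hR
      cases d
      · obtain ⟨U, hU, hRU⟩ := hk false
        exact ⟨U, Eval.condF hV hU, hRU⟩
      · obtain ⟨U, hU, hRU⟩ := hk true
        exact ⟨U, Eval.condT hV hU, hRU⟩
  | .nm, _, c, t, k, g, d => fun ht _ => by
      obtain ⟨V, _, hR⟩ := ht
      exact hR.elim
  | .prod a b, h, c, t, k, g, d => fun ht hk => by
      obtain ⟨V, hV, hR⟩ := ht
      simp only [R] at hR
      obtain ⟨V₁, V₂, rfl, h1, h2⟩ := hR
      simp only [caseTm]
      have inner : ∀ x, RT c (caseTm b (.snd t) (fun y => k (x, y))) (g (x, d.2)) :=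
        fun x => caseTm_spec b h.2 (.snd t) _ (fun y => g (x, y)) d.2
          ⟨V₂, Eval.snd hV, h2⟩ (fun y => hk (x, y))
      exact caseTm_spec a h.1 (.fst t) _ (fun x => g (x, d.2)) d.1
        ⟨V₁, Eval.fst hV, h1⟩ inner
  | .arrow a b, h, c, t, k, g, f => fun ht hk => by
      simp only [caseTm]
      have hmain := caseList_spec a b h.1 h.2 ((@Finset.univ _ (semFin a)).toList) t k g f ht hk
      rwa [override_univ a b f] at hmain
termination_by a _ _ _ _ _ => (sizeOf a, 0)
decreasing_by
  all_goals simp_wf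
  all_goals
    first
      | (apply Prod.Lex.left; omega)
      | (apply Prod.Lex.left
         have := sizeOf_ty_pos a
         have := sizeOf_ty_pos b
         omega)

theorem caseList_spec : ∀ (a b : Ty), NmFreeTy a → NmFreeTy b → ∀ {c : Ty}
    (xs : List (sem a)) (t : Tm) (k : (sem a → sem b) → Tm)
    (K : (sem a → sem b) → sem c) (f : sem a → sem b),
    RT (.arrow a b) t f → (∀ g, RT c (k g) (K g)) →
    RT c (caseList a b xs t k) (K (override a b xs f))
  | a, b, _, _, c, [], t, k, K, f => fun _ hk => by
      simp only [caseList]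
      rw [override_nil]
      exact hk _
  | a, b, ha, hb, c, x :: xs, t, k, K, f => fun ht hk => by
      letI := semDecEq a
      simp only [caseList]
      have happ : RT b (.app t (reify a x)) (f x) := by
        obtain ⟨V, hV, hR⟩ := ht
        simp only [R] at hR
        obtain ⟨hfv, z, β, B, rfl, hbeta⟩ := hR
        obtain ⟨U, hU, hRU⟩ := hbeta (reify a x) x (reflect a ha x)
        exact ⟨U, Eval.app hV (Eval.val (reify_value a x)) (reify_value a x) hU, hRU⟩
      rw [← override_cons a b x xs f]
      exact caseTm_spec b hb (.app t (reify a x)) _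
        (fun y => K (Function.update (override a b xs f) x y)) (f x) happ
        (fun y => caseList_spec a b ha hb xs t _
          (fun g => K (Function.update g x y)) f ht (fun g => hk _))
termination_by a b _ _ _ xs _ _ _ _ => (sizeOf a + sizeOf b, xs.length + 1)
decreasing_by
  all_goals simp_wf
  all_goals
    first
      | (apply Prod.Lex.right; omega)
      | (apply Prod.Lex.left
         have := sizeOf_ty_pos a
         have := sizeOf_ty_pos b
         omega)
      | (apply Prod.Lex.left; omega)
end

end Spec
section Fund

def Env := ℕ → (α : Ty) → sem α

def updEnv (ρ : Env) (x : ℕ) (α : Ty) (d : sem α) : Env :=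
  fun y β => if y = x then (if h : β = α then h ▸ d else ρ y β) else ρ y β

lemma updEnv_same (ρ : Env) (x : ℕ) (α : Ty) (d : sem α) :
    updEnv ρ x α d x α = d := by simp [updEnv]

lemma updEnv_other (ρ : Env) (x : ℕ) (α : Ty) (d : sem α) (y : ℕ) (β : Ty)
    (h : y ≠ x) : updEnv ρ x α d y β = ρ y β := by simp [updEnv, h]

def EnvRel (Γ : Ctx) (ξ : Model) (ρ : Env) : Prop :=
  (∀ p ∈ ξ, FV p.2 = ∅) ∧
  ∀ x α, lookupVar Γ x = some α → ∃ N, lookV ξ x = some N ∧ RT α N (ρ x α)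

lemma lookV_mem {ξ : Model} {z : ℕ} {N : Tm} (h : lookV ξ z = some N) :
    ∃ p ∈ ξ, p.1 = z ∧ p.2 = N := by
  simp only [lookV, Option.map_eq_some_iff] at h
  obtain ⟨p, hp, hsnd⟩ := h
  have hmem := List.mem_of_find?_eq_some hp
  have heq := List.find?_some hp
  simp only [beq_iff_eq] at heq
  exact ⟨p, hmem, heq, hsnd⟩

lemma lookV_filter_self (ξ : Model) (x : ℕ) :
    lookV (ξ.filter (fun p => x != p.1)) x = none := by
  induction ξ with
  | nil => rfl
  | cons p ξ ih =>
      rw [List.filter_cons]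
      by_cases hx : x = p.1
      · have : (x != p.1) = false := by simp [hx]
        simp only [this, Bool.false_eq_true, if_false]
        exact ih
      · have hb : (x != p.1) = true := by simp [hx]
        simp only [hb, if_pos]
        have hpx : (p.1 == x) = false := by
          simp only [beq_eq_false_iff_ne, ne_eq]
          exact fun h => hx h.symm
        simp only [lookV, List.find?_cons, hpx]
        exact ih

/-- The fundamental lemma of the logical relation. -/
theorem fund : ∀ {Γ M α}, Typed Γ M α → AN M = ∅ → NoGensym M →
    ∃ f : Env → sem α, ∀ ρ ξ, EnvRel Γ ξ ρ → RT α (msubst ξ M) (f ρ) := by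
  intro Γ M α ht
  induction ht with
  | @var Γ x α hl =>
      intro _ _
      refine ⟨fun ρ => ρ x α, ?_⟩
      rintro ρ ξ ⟨hcl, hrel⟩
      obtain ⟨N, hN, hRT⟩ := hrel x α hl
      rw [msubst_var hcl, hN]
      exact hRT
  | unit =>
      intro _ _
      exact ⟨fun _ => (), fun ρ ξ _ => by
        rw [msubst_unit]; exact ⟨.unit, Eval.val IsValue.unit, rfl⟩⟩
  | tt =>
      intro _ _
      exact ⟨fun _ => true, fun ρ ξ _ => by
        rw [msubst_tt]; exact ⟨.tt, Eval.val IsValue.tt, rfl⟩⟩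
  | ff =>
      intro _ _
      exact ⟨fun _ => false, fun ρ ξ _ => by
        rw [msubst_ff]; exact ⟨.ff, Eval.val IsValue.ff, rfl⟩⟩
  | name r =>
      intro hAN _
      exact absurd hAN (by simp [AN])
  | gensym =>
      intro _ hNG
      exact hNG.elim
  | @lam Γ x α β M hM ih =>
      intro hAN hNG
      have hAN' : AN M = ∅ := hAN
      have hNG' : NoGensym M := hNG
      obtain ⟨f', hf'⟩ := ih hAN' hNG'
      refine ⟨fun ρ => fun d => f' (updEnv ρ x α d), ?_⟩
      rintro ρ ξ ⟨hcl, hrel⟩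
      rw [msubst_lam]
      set ξ' := ξ.filter (fun p => x != p.1) with hξ'
      have hcl' : ∀ p ∈ ξ', FV p.2 = ∅ := fun p hp => hcl p (List.mem_of_mem_filter hp)
      have hsub : FV (msubst ξ' M) ⊆ {x} := by
        intro z hz
        simp only [Finset.mem_singleton]
        by_cases hzx : z = x
        · exact hzx
        · exfalso
          have h1 := fv_msubst hcl' M hz
          simp only [Finset.mem_sdiff, List.mem_toFinset, List.mem_map] at h1
          have h2 := typed_fv hM h1.1
          simp only [List.map_append, List.toFinset_append, Finset.mem_union,
            List.map_cons, List.map_nil, List.toFinset_cons, List.toFinset_nil,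
            Finset.mem_insert] at h2
          have hzΓ : z ∈ (Γ.map Prod.fst).toFinset := by
            simp only [List.mem_toFinset, List.mem_map]
            rcases h2 with h2 | h2
            · simpa using h2
            · rcases h2 with h2 | h2
              · exact absurd h2 hzx
              · exact absurd h2 (Finset.notMem_empty z)
          obtain ⟨γ, hγ⟩ := mem_lookupVar hzΓ
          obtain ⟨N, hN, _⟩ := hrel z γ hγ
          obtain ⟨p, hp, hp1, _⟩ := lookV_mem hN
          have hfilt : (x != p.1) = true := by
            rw [hp1]
            simp only [bne_iff_ne, ne_eq]
            exact fun h => hzx h.symm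
          exact h1.2 ⟨p, List.mem_filter_of_mem hp hfilt, hp1⟩
      refine ⟨_, Eval.val (IsValue.lam _ _ _), ?_⟩
      have hfv : FV (Tm.lam x α (msubst ξ' M)) = ∅ := by
        simp only [FV]
        rw [Finset.sdiff_eq_empty_iff_subset]
        exact hsub
      refine ⟨hfv, x, α, msubst ξ' M, rfl, ?_⟩
      intro W d hWd
      obtain ⟨hWv, hWc⟩ := R_value α hWd
      have hmsub : subst x W (msubst ξ' M) = msubst (ξ' ++ [(x, W)]) M := by
        rw [msubst_append]
        rfl
      rw [hmsub]
      apply hf' (updEnv ρ x α d) (ξ' ++ [(x, W)])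
      constructor
      · intro p hp
        rcases List.mem_append.mp hp with hp | hp
        · exact hcl' p hp
        · simp only [List.mem_singleton] at hp
          subst hp
          exact hWc
      · intro y γ hy
        rw [lookupVar_append] at hy
        by_cases hxy : x = y
        · subst hxy
          rw [if_pos rfl] at hy
          injection hy with hy
          subst hy
          refine ⟨W, ?_, ?_⟩
          · rw [lookV_append_single, lookV_filter_self]
            simp
          · rw [updEnv_same]
            exact ⟨W, Eval.val hWv, hWd⟩
        · rw [if_neg hxy] at hy
          obtain ⟨N, hN, hRT⟩ := hrel y γ hy
          refine ⟨N, ?_, ?_⟩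
          · rw [lookV_append_single, lookV_filter ξ x y (Ne.symm hxy), hN]
          · rw [updEnv_other _ _ _ _ _ _ (Ne.symm hxy)]
            exact hRT
  | @app Γ M N α β hM hN ihM ihN =>
      intro hAN hNG
      simp only [AN, Finset.union_eq_empty] at hAN
      obtain ⟨fM, hfM⟩ := ihM hAN.1 hNG.1
      obtain ⟨fN, hfN⟩ := ihN hAN.2 hNG.2
      refine ⟨fun ρ => fM ρ (fN ρ), ?_⟩
      intro ρ ξ hrel
      rw [msubst_app]
      obtain ⟨VM, hVM, hRM⟩ := hfM ρ ξ hrel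
      obtain ⟨W, hW, hRW⟩ := hfN ρ ξ hrel
      simp only [R] at hRM
      obtain ⟨hfv, z, β', B, rfl, hbeta⟩ := hRM
      obtain ⟨U, hU, hRU⟩ := hbeta W (fN ρ) hRW
      exact ⟨U, Eval.app hVM hW (R_value α hRW).1 hU, hRU⟩
  | @pair Γ M N α β hM hN ihM ihN =>
      intro hAN hNG
      simp only [AN, Finset.union_eq_empty] at hAN
      obtain ⟨fM, hfM⟩ := ihM hAN.1 hNG.1
      obtain ⟨fN, hfN⟩ := ihN hAN.2 hNG.2
      refine ⟨fun ρ => (fM ρ, fN ρ), ?_⟩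
      intro ρ ξ hrel
      rw [msubst_pair]
      obtain ⟨VM, hVM, hRM⟩ := hfM ρ ξ hrel
      obtain ⟨W, hW, hRW⟩ := hfN ρ ξ hrel
      exact ⟨.pair VM W, Eval.pair hVM hW, ⟨VM, W, rfl, hRM, hRW⟩⟩
  | @fst Γ M α β hM ihM =>
      intro hAN hNG
      obtain ⟨fM, hfM⟩ := ihM hAN hNG
      refine ⟨fun ρ => (fM ρ).1, ?_⟩
      intro ρ ξ hrel
      rw [msubst_fst]
      obtain ⟨VM, hVM, hRM⟩ := hfM ρ ξ hrel
      simp only [R] at hRM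
      obtain ⟨V₁, V₂, rfl, h1, h2⟩ := hRM
      exact ⟨V₁, Eval.fst hVM, h1⟩
  | @snd Γ M α β hM ihM =>
      intro hAN hNG
      obtain ⟨fM, hfM⟩ := ihM hAN hNG
      refine ⟨fun ρ => (fM ρ).2, ?_⟩
      intro ρ ξ hrel
      rw [msubst_snd]
      obtain ⟨VM, hVM, hRM⟩ := hfM ρ ξ hrel
      simp only [R] at hRM
      obtain ⟨V₁, V₂, rfl, h1, h2⟩ := hRM
      exact ⟨V₂, Eval.snd hVM, h2⟩
  | @cond Γ M N₁ N₂ α hM hN1 hN2 ihM ih1 ih2 =>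
      intro hAN hNG
      simp only [AN, Finset.union_eq_empty] at hAN
      obtain ⟨fM, hfM⟩ := ihM hAN.1.1 hNG.1
      obtain ⟨f1, hf1⟩ := ih1 hAN.1.2 hNG.2.1
      obtain ⟨f2, hf2⟩ := ih2 hAN.2 hNG.2.2
      refine ⟨fun ρ => bif fM ρ then f1 ρ else f2 ρ, ?_⟩
      intro ρ ξ hrel
      rw [msubst_cond]
      obtain ⟨VM, hVM, hRM⟩ := hfM ρ ξ hrel
      simp only [R] at hRM
      subst hRM
      cases hb : fM ρ
      · rw [hb] at hVM
        obtain ⟨U, hU, hRU⟩ := hf2 ρ ξ hrel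
        exact ⟨U, Eval.condF hVM hU, by simp only [hb, cond_false]; exact hRU⟩
      · rw [hb] at hVM
        obtain ⟨U, hU, hRU⟩ := hf1 ρ ξ hrel
        exact ⟨U, Eval.condT hVM hU, by simp only [hb, cond_true]; exact hRU⟩
  | @letin Γ x M N α β hM hN ihM ihN =>
      intro hAN hNG
      simp only [AN, Finset.union_eq_empty] at hAN
      obtain ⟨fM, hfM⟩ := ihM hAN.1 hNG.1
      obtain ⟨fN, hfN⟩ := ihN hAN.2 hNG.2
      refine ⟨fun ρ => fN (updEnv ρ x α (fM ρ)), ?_⟩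
      rintro ρ ξ ⟨hcl, hrel⟩
      rw [msubst_letin]
      obtain ⟨W, hW, hRW⟩ := hfM ρ ξ ⟨hcl, hrel⟩
      obtain ⟨hWv, hWc⟩ := R_value α hRW
      set ξ' := ξ.filter (fun p => x != p.1) with hξ'
      have hcl' : ∀ p ∈ ξ', FV p.2 = ∅ := fun p hp => hcl p (List.mem_of_mem_filter hp)
      have hmsub : subst x W (msubst ξ' N) = msubst (ξ' ++ [(x, W)]) N := by
        rw [msubst_append]
        rfl
      have henv : EnvRel (Γ ++ [(x, α)]) (ξ' ++ [(x, W)]) (updEnv ρ x α (fM ρ)) := by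
        constructor
        · intro p hp
          rcases List.mem_append.mp hp with hp | hp
          · exact hcl' p hp
          · simp only [List.mem_singleton] at hp
            subst hp
            exact hWc
        · intro y γ hy
          rw [lookupVar_append] at hy
          by_cases hxy : x = y
          · subst hxy
            rw [if_pos rfl] at hy
            injection hy with hy
            subst hy
            refine ⟨W, ?_, ?_⟩
            · rw [lookV_append_single, lookV_filter_self]
              simp
            · rw [updEnv_same]
              exact ⟨W, Eval.val hWv, hRW⟩
          · rw [if_neg hxy] at hy
            obtain ⟨N', hN', hRT⟩ := hrel y γ hy
            refine ⟨N', ?_, ?_⟩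
            · rw [lookV_append_single, lookV_filter ξ x y (Ne.symm hxy), hN']
            · rw [updEnv_other _ _ _ _ _ _ (Ne.symm hxy)]
              exact hRT
      obtain ⟨U, hU, hRU⟩ := hfN (updEnv ρ x α (fM ρ)) (ξ' ++ [(x, W)]) henv
      rw [← hmsub] at hU
      exact ⟨U, Eval.letin hW hWv hU, hRU⟩
  | @eqNm Γ M N hM hN ihM ihN =>
      intro hAN hNG
      simp only [AN, Finset.union_eq_empty] at hAN
      obtain ⟨fM, hfM⟩ := ihM hAN.1 hNG.1
      refine ⟨fun _ => true, ?_⟩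
      intro ρ ξ hrel
      obtain ⟨V, _, hR⟩ := hfM ρ ξ hrel
      exact hR.elim
  | @eqBool Γ M N hM hN ihM ihN =>
      intro hAN hNG
      simp only [AN, Finset.union_eq_empty] at hAN
      obtain ⟨fM, hfM⟩ := ihM hAN.1 hNG.1
      obtain ⟨fN, hfN⟩ := ihN hAN.2 hNG.2
      refine ⟨fun ρ => bif fM ρ then fN ρ else (bif fN ρ then false else true), ?_⟩
      intro ρ ξ hrel
      rw [msubst_eq]
      obtain ⟨VM, hVM, hRM⟩ := hfM ρ ξ hrel
      obtain ⟨VN, hVN, hRN⟩ := hfN ρ ξ hrel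
      simp only [R] at hRM hRN
      subst hRM
      subst hRN
      cases h1 : fM ρ <;> cases h2 : fN ρ <;> rw [h1] at hVM <;> rw [h2] at hVN
      · exact ⟨.tt, Eval.eqBoolT hVM hVN (Or.inr rfl), by simp only [R, h1, h2] <;> rfl⟩
      · exact ⟨.ff, Eval.eqBoolF hVM hVN (Or.inr ⟨rfl, rfl⟩), by simp only [R, h1, h2] <;> rfl⟩
      · exact ⟨.ff, Eval.eqBoolF hVM hVN (Or.inl ⟨rfl, rfl⟩), by simp only [R, h1, h2] <;> rfl⟩
      · exact ⟨.tt, Eval.eqBoolT hVM hVN (Or.inl rfl), by simp only [R, h1, h2] <;> rfl⟩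

end Fund
lemma boolVal_inj {b e : Bool} (h : boolVal b = boolVal e) : b = e := by
  cases b <;> cases e <;> simp_all [boolVal]

lemma envRel_nil (ρ : Env) : EnvRel [] [] ρ := by
  refine ⟨by simp, ?_⟩
  intro x β hx
  simp [lookupVar] at hx

lemma lookupVar_single (x y : ℕ) (α : Ty) :
    lookupVar [(x, α)] y = if x = y then some α else none := by
  by_cases h : x = y <;> simp [lookupVar, List.find?_cons, h]

lemma lookV_single (x y : ℕ) (N : Tm) :
    lookV [(x, N)] y = if x = y then some N else none := by
  by_cases h : x = y <;> simp [lookV, List.find?_cons, h]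

lemma envRel_single {α : Ty} {x : ℕ} {N : Tm} {d : sem α} (hc : FV N = ∅)
    (hRT : RT α N d) (ρ : Env) :
    EnvRel [(x, α)] [(x, N)] (updEnv ρ x α d) := by
  refine ⟨by simpa using hc, ?_⟩
  intro y γ hy
  rw [lookupVar_single] at hy
  by_cases hxy : x = y
  · rw [if_pos hxy] at hy
    injection hy with hy
    subst hy
    subst hxy
    exact ⟨N, by rw [lookV_single]; simp, by rw [updEnv_same]; exact hRT⟩
  · rw [if_neg hxy] at hy
    cases hy

/-- For every Nm-free simple type α there is a finite list of closed
STLC values of type α such that every closed STLC term of type α is contextually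
equivalent (w.r.t. STLC contexts) to some value in the list. -/
theorem stlc_finitely_many_values_up_to_ctx_equiv :
    ∀ α : Ty, NmFreeTy α →
      ∃ L : List Tm,
        (∀ V ∈ L, IsValue V ∧ Typed [] V α ∧ AN V = ∅ ∧ NoGensym V) ∧
        ∀ M : Tm, Typed [] M α → AN M = ∅ → NoGensym M →
          ∃ V ∈ L, ∀ (h : ℕ) (C : Tm) (b : Bool),
            Typed [(h, α)] C .bool → AN C = ∅ → NoGensym C →
            ((∃ G', Eval ∅ (subst h M C) G' (boolVal b)) ↔
             (∃ G', Eval ∅ (subst h V C) G' (boolVal b))) := by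
  intro α hNm
  refine ⟨((@Finset.univ _ (semFin α)).toList).map (reify α), ?_, ?_⟩
  · intro V hV
    simp only [List.mem_map] at hV
    obtain ⟨d, _, rfl⟩ := hV
    exact ⟨reify_value α d, typed_reify α hNm d [], (ang_reify α d).1, (ang_reify α d).2⟩
  · intro M htM hANM hNGM
    obtain ⟨f, hf⟩ := fund htM hANM hNGM
    set ρ₀ : Env := fun _ β => semDef β with hρ₀
    set d := f ρ₀ with hd
    have hRTM : RT α M d := by
      have := hf ρ₀ [] (envRel_nil ρ₀)
      rwa [msubst_nil] at this
    refine ⟨reify α d, ?_, ?_⟩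
    · simp only [List.mem_map]
      exact ⟨d, by simp [Finset.mem_toList], rfl⟩
    · intro hv C b htC hANC hNGC
      obtain ⟨g, hg⟩ := fund htC hANC hNGC
      set ρ := updEnv ρ₀ hv α d with hρ
      have hRTV : RT α (reify α d) d :=
        ⟨reify α d, Eval.val (reify_value α d), reflect α hNm d⟩
      have henvM : EnvRel [(hv, α)] [(hv, M)] ρ :=
        envRel_single (typed_closed htM) hRTM ρ₀
      have henvV : EnvRel [(hv, α)] [(hv, reify α d)] ρ :=
        envRel_single (fv_reify α d) hRTV ρ₀
      have hgM := hg ρ [(hv, M)] henvM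
      have hgV := hg ρ [(hv, reify α d)] henvV
      have hmsubM : msubst [(hv, M)] C = subst hv M C := rfl
      have hmsubV : msubst [(hv, reify α d)] C = subst hv (reify α d) C := rfl
      rw [hmsubM] at hgM
      rw [hmsubV] at hgV
      obtain ⟨VM, hEvM, hRVM⟩ := hgM
      obtain ⟨VV, hEvV, hRVV⟩ := hgV
      simp only [R] at hRVM hRVV
      subst hRVM
      subst hRVV
      have hngM : NoGensym (subst hv M C) := ng_subst hNGM hNGC
      have hngV : NoGensym (subst hv (reify α d) C) :=
        ng_subst (ang_reify α d).2 hNGC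
      constructor
      · rintro ⟨G', hEv⟩
        obtain ⟨_, heq⟩ := eval_det' hEvM hngM hEv
        have hb := boolVal_inj heq
        rw [← hb]
        exact ⟨∅, hEvV⟩
      · rintro ⟨G', hEv⟩
        obtain ⟨_, heq⟩ := eval_det' hEvV hngV hEv
        have hb := boolVal_inj heq
        rw [← hb]
        exact ⟨∅, hEvM⟩
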